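/- With p, the red/blue coloring, and the type assignment (A, B, C, D) as in the refined decomposition of a 1324-avoiding permutation, there is no value i ∈ {1,...,n−1} such that the entry with value i has type C and the entry with value i+1 has type B. -/

import Mathlib

inductive Letter | A | B | C | D
deriving DecidableEq

def NoCB (w : List Letter) : Prop :=
  List.Chain' (fun a b => ¬(a = Letter.C ∧ b = Letter.B)) w

noncomputable def hword (n : ℕ) : ℕ :=
  Nat.card {w : List Letter // w.length = n ∧ NoCB w}
def redCond (p : ℕ → ℕ) (c : List Bool) (i : ℕ) : Bool :=
  decide (¬ ∃ j < i, ∃ k < i, j < k ∧ c.getD j false = true ∧ c.getD k false = true ∧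
      p j < p i ∧ p i < p k) &&
  decide (¬ ∃ j < i, c.getD j false = false ∧ p j < p i)

def colorsAux (p : ℕ → ℕ) : ℕ → List Bool
  | 0 => []
  | i+1 => colorsAux p i ++ [redCond p (colorsAux p i) i]

/-- `isRed p i = true` iff the greedy procedure colors the entry in position `i` red. -/
def isRed (p : ℕ → ℕ) (i : ℕ) : Bool := (colorsAux p (i+1)).getD i false

/-- The type of the entry in position `i` of a permutation of `{0,...,n-1}`:
`A` = red left-to-right minimum of the red subsequence, `B` = other red,
`D` = blue right-to-left maximum of the blue subsequence, `C` = other blue. -/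
def typeOf (n : ℕ) (p : ℕ → ℕ) (i : ℕ) : Letter :=
  if isRed p i then
    if ∀ j < i, isRed p j = true → p i < p j then Letter.A else Letter.B
  else
    if ∀ j < n, i < j → isRed p j = false → p j < p i then Letter.D else Letter.C

def toNatFun {n : ℕ} (p : Equiv.Perm (Fin n)) : ℕ → ℕ :=
  fun i => if h : i < n then (p ⟨i, h⟩ : ℕ) else i

def Avoids1324 {n : ℕ} (p : Equiv.Perm (Fin n)) : Prop :=
  ¬ ∃ i₁ i₂ i₃ i₄ : Fin n, i₁ < i₂ ∧ i₂ < i₃ ∧ i₃ < i₄ ∧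
    p i₁ < p i₃ ∧ p i₃ < p i₂ ∧ p i₂ < p i₄

/-- The word `w(p)`: types by position. -/
def wWord {n : ℕ} (p : Equiv.Perm (Fin n)) (i : Fin n) : Letter :=
  typeOf n (toNatFun p) i

/-- The word `z(p)`: types by value. -/
def zWord {n : ℕ} (p : Equiv.Perm (Fin n)) (v : Fin n) : Letter :=
  typeOf n (toNatFun p) (p.symm v)

lemma colorsAux_length (p : ℕ → ℕ) (m : ℕ) : (colorsAux p m).length = m := by
  induction m with
  | zero => rfl
  | succ m ih => simp [colorsAux, ih]

lemma colorsAux_getD (p : ℕ → ℕ) {i m : ℕ} (h : i < m) :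
    (colorsAux p m).getD i false = isRed p i := by
  induction m with
  | zero => omega
  | succ m ih =>
    rcases Nat.lt_succ_iff_lt_or_eq.mp h with h' | h'
    · rw [show colorsAux p (m+1) = colorsAux p m ++ [redCond p (colorsAux p m) m] from rfl,
        List.getD_eq_getElem?_getD, List.getElem?_append_left
          (by rw [colorsAux_length]; exact h'), ← List.getD_eq_getElem?_getD]
      exact ih h'
    · subst h'; rfl

lemma isRed_eq (p : ℕ → ℕ) (i : ℕ) :
    isRed p i = redCond p (colorsAux p i) i := by
  show (colorsAux p i ++ [redCond p (colorsAux p i) i]).getD i false = _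
  rw [List.getD_eq_getElem?_getD, List.getElem?_append_right (by rw [colorsAux_length])]
  simp [colorsAux_length]

/-- In a 1324-avoiding permutation, there is no value v such that v has type C and
v+1 has type B. -/
theorem stmt6 {n : ℕ} (p : Equiv.Perm (Fin n)) (hp : Avoids1324 p) :
    ∀ (v : Fin n) (h : (v : ℕ) + 1 < n),
      ¬(zWord p v = Letter.C ∧ zWord p ⟨(v : ℕ) + 1, h⟩ = Letter.B) := by
  rintro v h ⟨hC, hB⟩
  set P := toNatFun p with hP
  unfold zWord typeOf at hC hB
  set i : ℕ := ((p.symm v : Fin n) : ℕ) with hi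
  set j : ℕ := ((p.symm ⟨(v : ℕ) + 1, h⟩ : Fin n) : ℕ) with hj
  have hin : i < n := (p.symm v).isLt
  have hjn : j < n := (p.symm ⟨(v : ℕ) + 1, h⟩).isLt
  have hPval : ∀ a (ha : a < n), ((p ⟨a, ha⟩ : Fin n) : ℕ) = P a := by
    intro a ha; rw [hP]; unfold toNatFun; rw [dif_pos ha]
  have hPi : P i = (v : ℕ) := by
    rw [← hPval i hin]
    have e : (⟨i, hin⟩ : Fin n) = p.symm v := Fin.ext rfl
    rw [e, Equiv.apply_symm_apply]
  have hPj : P j = (v : ℕ) + 1 := by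
    rw [← hPval j hjn]
    have e : (⟨j, hjn⟩ : Fin n) = p.symm ⟨(v : ℕ) + 1, h⟩ := Fin.ext rfl
    rw [e, Equiv.apply_symm_apply]
  have hinj : ∀ a b, a < n → b < n → P a = P b → a = b := by
    intro a b ha hb hab
    rw [← hPval a ha, ← hPval b hb] at hab
    have := p.injective (Fin.val_injective hab)
    simpa using congrArg Fin.val this
  -- extract info from hC : value v has type C
  have hiblue : isRed P i = false := by
    cases hri : isRed P i with
    | false => rfl
    | true => rw [if_pos hri] at hC; split at hC <;> exact Letter.noConfusion hC
  rw [if_neg (by rw [← hP]; simp [hiblue])] at hC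
  have hCk : ∃ k, k < n ∧ i < k ∧ isRed P k = false ∧ P i ≤ P k := by
    by_cases hD : ∀ k < n, i < k → isRed P k = false → P k < P i
    · rw [if_pos hD] at hC; exact absurd hC (by decide)
    · push_neg at hD
      obtain ⟨k, h1, h2, h3, h4⟩ := hD
      exact ⟨k, h1, h2, h3, h4⟩
  obtain ⟨k, hkn, hik, hkblue, hkge⟩ := hCk
  -- extract info from hB : value v+1 has type B
  have hjred : isRed P j = true := by
    cases hrj : isRed P j with
    | true => rfl
    | false => rw [if_neg (by rw [← hP]; simp [hrj])] at hB; split at hB <;> exact Letter.noConfusion hB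
  rw [if_pos hjred] at hB
  have hBa : ∃ a, a < j ∧ isRed P a = true ∧ P a ≤ P j := by
    by_cases hA : ∀ a < j, isRed P a = true → P j < P a
    · rw [if_pos hA] at hB; exact absurd hB (by decide)
    · push_neg at hA
      obtain ⟨a, h1, h2, h3⟩ := hA
      exact ⟨a, h1, h2, h3⟩
  obtain ⟨a, haj, hared, hale⟩ := hBa
  -- j < i : otherwise the redness of j is contradicted by blue i with smaller value
  have hji : j < i := by
    rcases lt_trichotomy j i with hlt | heq | hgt
    · exact hlt
    · exact absurd (heq ▸ hjred) (by simp [hiblue])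
    · exfalso
      rw [isRed_eq] at hjred
      unfold redCond at hjred
      rw [Bool.and_eq_true, decide_eq_true_iff, decide_eq_true_iff] at hjred
      exact hjred.2 ⟨i, hgt, by rw [colorsAux_getD P hgt]; exact hiblue,
        by rw [hPi, hPj]; omega⟩
  -- value bookkeeping
  have han : a < n := lt_trans (lt_trans haj hji) hin
  have haPi : P a < P i := by
    have h1 : P a ≠ P i := fun hh => absurd (hinj a i han hin hh) (by omega)
    have h2 : P a ≠ P j := fun hh => absurd (hinj a j han hjn hh) (by omega)
    rw [hPi] at h1 ⊢; rw [hPj] at h2 hale; omega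
  have hkPj : P j < P k := by
    have h1 : P k ≠ P i := fun hh => absurd (hinj k i hkn hin hh) (by omega)
    have h2 : k ≠ j := fun hh => by rw [hh, hjred] at hkblue; exact Bool.noConfusion hkblue
    have h3 : P k ≠ P j := fun hh => h2 (hinj k j hkn hjn hh)
    rw [hPi] at hkge h1; rw [hPj] at h3 ⊢; omega
  -- build the 1324 pattern
  refine hp ⟨⟨a, han⟩, ⟨j, hjn⟩, ⟨i, hin⟩, ⟨k, hkn⟩, ?_, ?_, ?_, ?_, ?_, ?_⟩
  · exact haj
  · exact hji
  · exact hik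
  · show ((p ⟨a, han⟩ : Fin n) : ℕ) < ((p ⟨i, hin⟩ : Fin n) : ℕ)
    rw [hPval, hPval]; exact haPi
  · show ((p ⟨i, hin⟩ : Fin n) : ℕ) < ((p ⟨j, hjn⟩ : Fin n) : ℕ)
    rw [hPval, hPval, hPi, hPj]; omega
  · show ((p ⟨j, hjn⟩ : Fin n) : ℕ) < ((p ⟨k, hkn⟩ : Fin n) : ℕ)
    rw [hPval, hPval]; exact hkPj
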